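/- Fix m ≥ 2 and let (c_n)_{n∈ℕ} be a sequence of natural numbers with c_n/n → 0. For each n, let A_n be the set of vectors x = (x_1,…,x_m) ∈ ℕ^m with x_1 + ⋯ + x_m = n such that there exists an index w with x_i − x_w ≥ c_n + 1 for every i ≠ w. Then lim_{n→∞} |A_n| / C(n+m−1, m−1) = 1. -/

import Mathlib

open Finset

private lemma card_antidiagonalTuple_eq (m : ℕ) : ∀ n : ℕ,
    (Finset.Nat.antidiagonalTuple (m + 1) n).card = (n + m).choose m := by
  induction m with
  | zero => intro n; simp [Finset.Nat.antidiagonalTuple_one]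
  | succ m ih =>
    intro n
    have h1 : (Finset.Nat.antidiagonalTuple (m + 2) n).card
        = ∑ a ∈ Finset.range (n + 1),
            ((Finset.Nat.antidiagonalTuple (m + 2) n).filter (fun x => x 0 = a)).card := by
      apply Finset.card_eq_sum_card_fiberwise
      intro x hx
      rw [Finset.mem_coe, Finset.Nat.mem_antidiagonalTuple] at hx
      have := Finset.single_le_sum (f := x) (fun i _ => Nat.zero_le _) (Finset.mem_univ 0)
      exact Finset.mem_range.2 (show x 0 < n + 1 by omega)
    have h2 : ∀ a ∈ Finset.range (n + 1),
        ((Finset.Nat.antidiagonalTuple (m + 2) n).filter (fun x => x 0 = a)).card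
          = ((n - a) + m).choose m := by
      intro a ha
      rw [Finset.mem_range] at ha
      rw [← ih (n - a)]
      clear h1
      refine Finset.card_nbij' (fun x => Fin.tail x) (fun y => Fin.cons a y) ?_ ?_ ?_ ?_
      · intro x hx
        rw [Finset.mem_coe, Finset.mem_filter, Finset.Nat.mem_antidiagonalTuple] at hx
        rw [Finset.mem_coe, Finset.Nat.mem_antidiagonalTuple]
        show ∑ i : Fin (m + 1), x i.succ = n - a
        obtain ⟨h1x, h2x⟩ := hx
        have h2 : x 0 + ∑ i : Fin (m + 1), x i.succ = n := by
          rw [← h1x]; exact (Fin.sum_univ_succ x).symm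
        omega
      · intro y hy
        rw [Finset.mem_coe, Finset.Nat.mem_antidiagonalTuple] at hy
        rw [Finset.mem_coe, Finset.mem_filter, Finset.Nat.mem_antidiagonalTuple]
        refine ⟨?_, by simp⟩
        have h2 : ∑ i, Fin.cons a y i = a + ∑ i, y i := Fin.sum_cons a y
        rw [h2, hy]
        omega
      · intro x hx
        rw [Finset.mem_coe, Finset.mem_filter] at hx
        rw [← hx.2]
        exact Fin.cons_self_tail x
      · intro y _
        simp
    rw [h1, Finset.sum_congr rfl h2]
    have h3 := Finset.sum_range_reflect (fun i => (i + m).choose m) (n + 1)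
    simp only [Nat.add_sub_cancel] at h3
    calc ∑ a ∈ range (n+1), ((n - a) + m).choose m
        = ∑ i ∈ range (n+1), (i + m).choose m := h3
      _ = (n + m + 1).choose (m + 1) := Nat.sum_range_add_choose n m
      _ = (n + (m+1)).choose (m+1) := by rw [Nat.add_assoc]

private lemma slice_card_le (k n d : ℕ) (i j : Fin (k + 2)) (hij : i ≠ j) :
    ((Finset.Nat.antidiagonalTuple (k + 2) n).filter (fun x => x i = x j + d)).card
      ≤ (n + k).choose k := by
  obtain ⟨tj, htj⟩ : ∃ t : Fin (k + 1), i.succAbove t = j :=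
    Fin.exists_succAbove_eq (Ne.symm hij)
  set f : (Fin (k + 2) → ℕ) → (Fin (k + 1) → ℕ) :=
    fun x t => if i.succAbove t = j then 2 * x j else x (i.succAbove t) with hf
  have key : ∀ x ∈ (Finset.Nat.antidiagonalTuple (k + 2) n).filter (fun x => x i = x j + d),
      (∑ t, f x t) + d = n := by
    intro x hx
    rw [Finset.mem_filter, Finset.Nat.mem_antidiagonalTuple] at hx
    obtain ⟨hsum, hxi⟩ := hx
    have hA : ∑ s, x s = x i + ∑ t, x (i.succAbove t) := Fin.sum_univ_succAbove x i
    have hsplit : ∑ t, x (i.succAbove t)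
        = x (i.succAbove tj) + ∑ t ∈ Finset.univ.erase tj, x (i.succAbove t) :=
      (Finset.add_sum_erase _ _ (Finset.mem_univ tj)).symm
    have hfeq : ∑ t, f x t = 2 * x j + ∑ t ∈ Finset.univ.erase tj, x (i.succAbove t) := by
      rw [← Finset.add_sum_erase _ (f x) (Finset.mem_univ tj)]
      congr 1
      · simp [hf, htj]
      · apply Finset.sum_congr rfl
        intro t ht
        have hne : i.succAbove t ≠ j := by
          intro h
          exact (Finset.mem_erase.1 ht).1
            (Fin.succAbove_right_injective (h.trans htj.symm))
        simp [hf, hne]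
    rw [htj] at hsplit
    omega
  have hmem : ∀ x ∈ (Finset.Nat.antidiagonalTuple (k + 2) n).filter (fun x => x i = x j + d),
      f x ∈ Finset.Nat.antidiagonalTuple (k + 1) (n - d) := by
    intro x hx
    rw [Finset.Nat.mem_antidiagonalTuple]
    have := key x hx
    omega
  have hinj : Set.InjOn f
      ((Finset.Nat.antidiagonalTuple (k + 2) n).filter (fun x => x i = x j + d)) := by
    intro x hx y hy hxy
    rw [Finset.coe_filter, Set.mem_setOf_eq, Finset.Nat.mem_antidiagonalTuple] at hx hy
    have hj' : x j = y j := by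
      have := congrFun hxy tj
      simp only [hf, htj, if_pos] at this
      omega
    funext s
    by_cases hsi : s = i
    · subst hsi; omega
    · obtain ⟨t, ht⟩ : ∃ t : Fin (k + 1), i.succAbove t = s :=
        Fin.exists_succAbove_eq (Ne.symm (fun h => hsi h.symm))
      by_cases hsj : s = j
      · subst hsj; exact hj'
      · have := congrFun hxy t
        simp only [hf, ht, if_neg hsj] at this
        exact this
  calc ((Finset.Nat.antidiagonalTuple (k + 2) n).filter (fun x => x i = x j + d)).card
      ≤ (Finset.Nat.antidiagonalTuple (k + 1) (n - d)).card :=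
        Finset.card_le_card_of_injOn f hmem hinj
    _ = ((n - d) + k).choose k := card_antidiagonalTuple_eq k (n - d)
    _ ≤ (n + k).choose k := Nat.choose_le_choose k (by omega)

private lemma bad_card_le (k cc n : ℕ) :
    ((Finset.Nat.antidiagonalTuple (k + 2) n).filter
        (fun x => ¬ ∃ w : Fin (k + 2), ∀ i : Fin (k + 2), i ≠ w → x w + cc + 1 ≤ x i)).card
      ≤ (k + 2) * (k + 2) * (cc + 1) * (n + k).choose k := by
  classical
  set I : Finset ((Fin (k + 2) × Fin (k + 2)) × ℕ) :=
    ((Finset.univ ×ˢ Finset.univ).filter (fun p : Fin (k + 2) × Fin (k + 2) => p.1 ≠ p.2))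
      ×ˢ Finset.range (cc + 1) with hI
  have hsub : ((Finset.Nat.antidiagonalTuple (k + 2) n).filter
        (fun x => ¬ ∃ w : Fin (k + 2), ∀ i : Fin (k + 2), i ≠ w → x w + cc + 1 ≤ x i))
      ⊆ I.biUnion (fun p => (Finset.Nat.antidiagonalTuple (k + 2) n).filter
        (fun x => x p.1.1 = x p.1.2 + p.2)) := by
    intro x hx
    rw [Finset.mem_filter] at hx
    obtain ⟨hx1, hx2⟩ := hx
    obtain ⟨j, -, hj⟩ := Finset.exists_min_image Finset.univ x ⟨0, Finset.mem_univ 0⟩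
    push_neg at hx2
    obtain ⟨i, hij, hlt⟩ := hx2 j
    have hji : x j ≤ x i := hj i (Finset.mem_univ i)
    rw [Finset.mem_biUnion]
    refine ⟨((i, j), x i - x j), ?_, ?_⟩
    · rw [hI, Finset.mem_product]
      refine ⟨Finset.mem_filter.2 ⟨Finset.mem_product.2 ⟨Finset.mem_univ _, Finset.mem_univ _⟩, hij⟩,
        Finset.mem_range.2 (by omega)⟩
    · rw [Finset.mem_filter]
      exact ⟨hx1, by simp only; omega⟩
  calc ((Finset.Nat.antidiagonalTuple (k + 2) n).filter
        (fun x => ¬ ∃ w : Fin (k + 2), ∀ i : Fin (k + 2), i ≠ w → x w + cc + 1 ≤ x i)).card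
      ≤ (I.biUnion (fun p => (Finset.Nat.antidiagonalTuple (k + 2) n).filter
          (fun x => x p.1.1 = x p.1.2 + p.2))).card := Finset.card_le_card hsub
    _ ≤ ∑ p ∈ I, ((Finset.Nat.antidiagonalTuple (k + 2) n).filter
          (fun x => x p.1.1 = x p.1.2 + p.2)).card := Finset.card_biUnion_le
    _ ≤ ∑ _p ∈ I, (n + k).choose k := by
        apply Finset.sum_le_sum
        intro p hp
        rw [hI, Finset.mem_product, Finset.mem_filter] at hp
        exact slice_card_le k n p.2 p.1.1 p.1.2 hp.1.2
    _ = I.card * (n + k).choose k := by rw [Finset.sum_const, smul_eq_mul]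
    _ ≤ (k + 2) * (k + 2) * (cc + 1) * (n + k).choose k := by
        apply Nat.mul_le_mul_right
        rw [hI, Finset.card_product, Finset.card_range]
        have h1 : ((Finset.univ ×ˢ Finset.univ).filter
            (fun p : Fin (k + 2) × Fin (k + 2) => p.1 ≠ p.2)).card
            ≤ (k + 2) * (k + 2) := by
          refine le_trans (Finset.card_filter_le _ _) ?_
          rw [Finset.card_product, Finset.card_univ, Fintype.card_fin]
        calc ((Finset.univ ×ˢ Finset.univ).filter
              (fun p : Fin (k + 2) × Fin (k + 2) => p.1 ≠ p.2)).card * (cc + 1)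
            ≤ ((k + 2) * (k + 2)) * (cc + 1) := Nat.mul_le_mul_right _ h1

/-- Veto is asymptotically `o(n)`-collusion-proof on the number of voters under
the ISC assumption: if `c n / n → 0`, the fraction of veto scoring profiles with `n` voters
and `m ≥ 2` candidates in which some candidate has at least `c n + 1` fewer vetoes than
every other candidate tends to `1` as `n → ∞`. -/
theorem veto_asymptotically_collusion_proof_on_voters (m : ℕ) (hm : 2 ≤ m)
    (c : ℕ → ℕ)
    (hc : Filter.Tendsto (fun n : ℕ => (c n : ℝ) / (n : ℝ)) Filter.atTop (nhds 0)) :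
    Filter.Tendsto
      (fun n : ℕ =>
        (({x : Fin m → ℕ | (∑ i, x i) = n ∧
            ∃ w : Fin m, ∀ i : Fin m, i ≠ w → x w + c n + 1 ≤ x i}).ncard : ℝ) /
          (Nat.choose (n + m - 1) (m - 1) : ℝ))
      Filter.atTop (nhds 1) := by
  obtain ⟨k, rfl⟩ : ∃ k, m = k + 2 := ⟨m - 2, by omega⟩
  clear hm
  set t : ℕ → ℕ := fun n => (n + k + 1).choose (k + 1) with ht
  set g : ℕ → ℕ := fun n => ((Finset.Nat.antidiagonalTuple (k + 2) n).filter
      (fun x => ∃ w : Fin (k + 2), ∀ i : Fin (k + 2), i ≠ w → x w + c n + 1 ≤ x i)).card with hg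
  set b : ℕ → ℕ := fun n => ((Finset.Nat.antidiagonalTuple (k + 2) n).filter
      (fun x => ¬ ∃ w : Fin (k + 2), ∀ i : Fin (k + 2), i ≠ w → x w + c n + 1 ≤ x i)).card with hb
  have htot : ∀ n, g n + b n = t n := by
    intro n
    simp only [hg, hb, ht]
    rw [Finset.card_filter_add_card_filter_not]
    rw [card_antidiagonalTuple_eq (k + 1) n, ← Nat.add_assoc]
  have htpos : ∀ n, 0 < t n := fun n => Nat.choose_pos (by omega)
  have hkey : ∀ n, (n + k).choose k * (n + k + 1) = t n * (k + 1) := by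
    intro n
    have h := Nat.add_one_mul_choose_eq (n + k) k
    rw [mul_comm]
    exact h
  have hbb : ∀ n, b n * n ≤ (k + 2) * (k + 2) * (k + 1) * (c n + 1) * t n := by
    intro n
    have e1 : b n ≤ (k + 2) * (k + 2) * (c n + 1) * (n + k).choose k := bad_card_le k (c n) n
    calc b n * n ≤ b n * (n + k + 1) := Nat.mul_le_mul_left _ (by omega)
      _ ≤ ((k + 2) * (k + 2) * (c n + 1) * (n + k).choose k) * (n + k + 1) :=
          Nat.mul_le_mul_right _ e1
      _ = ((k + 2) * (k + 2) * (c n + 1)) * ((n + k).choose k * (n + k + 1)) := by ring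
      _ = ((k + 2) * (k + 2) * (c n + 1)) * (t n * (k + 1)) := by rw [hkey n]
      _ = (k + 2) * (k + 2) * (k + 1) * (c n + 1) * t n := by ring
  have hb0 : Filter.Tendsto (fun n => (b n : ℝ) / (t n : ℝ)) Filter.atTop (nhds 0) := by
    have hub : ∀ᶠ n in Filter.atTop, (b n : ℝ) / (t n : ℝ)
        ≤ (((k : ℝ) + 2) * ((k : ℝ) + 2) * ((k : ℝ) + 1)) * (((c n : ℝ) + 1) / (n : ℝ)) := by
      filter_upwards [Filter.eventually_ge_atTop 1] with n hn
      have h1 : (0 : ℝ) < (t n : ℝ) := by exact_mod_cast htpos n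
      have h2 : (0 : ℝ) < (n : ℝ) := by
        have : (1 : ℕ) ≤ n := hn
        exact_mod_cast Nat.lt_of_lt_of_le Nat.zero_lt_one this
      have hcast : (b n : ℝ) * (n : ℝ)
          ≤ ((k : ℝ) + 2) * ((k : ℝ) + 2) * ((k : ℝ) + 1) * ((c n : ℝ) + 1) * (t n : ℝ) := by
        exact_mod_cast hbb n
      rw [mul_div_assoc', div_le_div_iff₀ h1 h2]
      calc (b n : ℝ) * (n : ℝ)
          ≤ ((k : ℝ) + 2) * ((k : ℝ) + 2) * ((k : ℝ) + 1) * ((c n : ℝ) + 1) * (t n : ℝ) := hcast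
        _ = ((k : ℝ) + 2) * ((k : ℝ) + 2) * ((k : ℝ) + 1) * ((c n : ℝ) + 1) * (t n : ℝ) := rfl
    have hu : Filter.Tendsto
        (fun n : ℕ => (((k : ℝ) + 2) * ((k : ℝ) + 2) * ((k : ℝ) + 1)) * (((c n : ℝ) + 1) / (n : ℝ)))
        Filter.atTop (nhds 0) := by
      have h1 : Filter.Tendsto (fun n : ℕ => (c n : ℝ) / (n : ℝ) + 1 / (n : ℝ))
          Filter.atTop (nhds (0 + 0)) := hc.add tendsto_one_div_atTop_nhds_zero_nat
      have heq : (fun n : ℕ => (((k : ℝ) + 2) * ((k : ℝ) + 2) * ((k : ℝ) + 1))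
            * (((c n : ℝ) + 1) / (n : ℝ)))
          = fun n : ℕ => (((k : ℝ) + 2) * ((k : ℝ) + 2) * ((k : ℝ) + 1))
            * ((c n : ℝ) / (n : ℝ) + 1 / (n : ℝ)) := by
        funext n
        rw [add_div]
      rw [heq]
      simpa using h1.const_mul (((k : ℝ) + 2) * ((k : ℝ) + 2) * ((k : ℝ) + 1))
    exact squeeze_zero' (Filter.Eventually.of_forall (fun n => by positivity)) hub hu
  have hmain : Filter.Tendsto (fun n => (g n : ℝ) / (t n : ℝ)) Filter.atTop (nhds 1) := by
    have heq : (fun n => (g n : ℝ) / (t n : ℝ)) = fun n => 1 - (b n : ℝ) / (t n : ℝ) := by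
      funext n
      have h1 : (t n : ℝ) ≠ 0 := by
        have := htpos n
        positivity
      have h2 : (g n : ℝ) + (b n : ℝ) = (t n : ℝ) := by exact_mod_cast htot n
      have h3 : (g n : ℝ) = (t n : ℝ) - (b n : ℝ) := by linarith
      rw [h3, sub_div, div_self h1]
    rw [heq]
    have := Filter.Tendsto.sub
      (tendsto_const_nhds : Filter.Tendsto (fun _ : ℕ => (1 : ℝ)) Filter.atTop (nhds 1)) hb0
    simpa using this
  refine hmain.congr ?_
  intro n
  have hnum : ({x : Fin (k + 2) → ℕ | (∑ i, x i) = n ∧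
      ∃ w : Fin (k + 2), ∀ i : Fin (k + 2), i ≠ w → x w + c n + 1 ≤ x i}).ncard = g n := by
    simp only [hg]
    rw [← Set.ncard_coe_finset]
    congr 1
    ext x
    simp [Finset.Nat.mem_antidiagonalTuple]
  have hden : (n + (k + 2) - 1).choose ((k + 2) - 1) = t n := by
    rfl
  rw [hnum, hden]
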